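/- For real q with 0 < q ≠ 1, odd positive integers w₁,...,wₙ, integers k₁,...,k_{n-1}, and reals x, y: [y + wₙx + wₙ∑_{j=1}^{n-1} k_j/w_j]_{q^{w₁⋯w_{n-1}}} = ([wₙ]_q / [∏_{j=1}^{n-1} w_j]_q) · [∑_{j=1}^{n-1}(∏_{i≠j} w_i)k_j]_{q^{wₙ}} + q^{wₙ·∑_{j=1}^{n-1}(∏_{i≠j} w_i)k_j} · [y + wₙx]_{q^{w₁⋯w_{n-1}}}, where [x]_q = (1-q^x)/(1-q) and all products ∏_{i≠j} run over i ∈ {1,...,n-1} with i ≠ j. -/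

import Mathlib

open Finset

/-- `[x]_q = (1 - q^x)/(1 - q)` for real `x` and real `q`. -/
noncomputable def qNum (q x : ℝ) : ℝ := (1 - q ^ x) / (1 - q)

lemma rpow_ne_one_of_pos {q t : ℝ} (hq : 0 < q) (hq1 : q ≠ 1) (ht : 0 < t) :
    q ^ t ≠ 1 := by
  rcases lt_or_gt_of_ne hq1 with h | h
  · exact ne_of_lt (Real.rpow_lt_one hq.le h ht)
  · exact ne_of_gt (Real.one_lt_rpow h ht)

/-- Equation (13): with `w₀,…,wₙ` odd positive integers (the last one being the
`w_n` of the paper) and `K = ∑_{j<n} (∏_{i<n, i≠j} w_i) k_j`,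
`[y + wₙx + wₙ∑_{j<n} k_j/w_j]_{q^{w₀⋯w_{n-1}}}
  = ([wₙ]_q/[∏_{j<n} w_j]_q)·[K]_{q^{wₙ}} + q^{wₙK}·[y + wₙx]_{q^{w₀⋯w_{n-1}}}`. -/
theorem qNum_decompose (n : ℕ) (w : Fin (n + 1) → ℕ)
    (hw : ∀ i, Odd (w i)) (hw0 : ∀ i, 0 < w i)
    (k : Fin n → ℤ) (q x y : ℝ) (hq : 0 < q) (hq1 : q ≠ 1) :
    qNum (q ^ (∏ j : Fin n, (w j.castSucc : ℝ)))
        (y + (w (Fin.last n) : ℝ) * x +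
          (w (Fin.last n) : ℝ) * ∑ j : Fin n, (k j : ℝ) / (w j.castSucc : ℝ)) =
      (qNum q (w (Fin.last n) : ℝ) / qNum q (∏ j : Fin n, (w j.castSucc : ℝ))) *
          qNum (q ^ ((w (Fin.last n) : ℕ) : ℝ))
            (∑ j : Fin n, (∏ i ∈ Finset.univ.erase j, (w i.castSucc : ℝ)) * (k j : ℝ)) +
        q ^ ((w (Fin.last n) : ℝ) *
              ∑ j : Fin n, (∏ i ∈ Finset.univ.erase j, (w i.castSucc : ℝ)) * (k j : ℝ)) *
          qNum (q ^ (∏ j : Fin n, (w j.castSucc : ℝ)))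
            (y + (w (Fin.last n) : ℝ) * x) := by
  set W : ℝ := (w (Fin.last n) : ℝ) with hWdef
  set P : ℝ := ∏ j : Fin n, (w j.castSucc : ℝ) with hPdef
  set K : ℝ := ∑ j : Fin n, (∏ i ∈ Finset.univ.erase j, (w i.castSucc : ℝ)) * (k j : ℝ)
    with hKdef
  have hP : 0 < P := Finset.prod_pos fun j _ => by exact_mod_cast hw0 j.castSucc
  have hW : 0 < W := by rw [hWdef]; exact_mod_cast hw0 (Fin.last n)
  have hsum : P * (∑ j : Fin n, (k j : ℝ) / (w j.castSucc : ℝ)) = K := by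
    rw [Finset.mul_sum, hKdef]
    refine Finset.sum_congr rfl fun j _ => ?_
    have hwj : (w j.castSucc : ℝ) ≠ 0 := by
      exact_mod_cast (hw0 j.castSucc).ne'
    have hPj : P = (w j.castSucc : ℝ) * ∏ i ∈ Finset.univ.erase j, (w i.castSucc : ℝ) :=
      (Finset.mul_prod_erase Finset.univ _ (Finset.mem_univ j)).symm
    rw [hPj]; field_simp
  have hA : (1 : ℝ) - q ^ P ≠ 0 := by
    intro h
    exact rpow_ne_one_of_pos hq hq1 hP (by linarith)
  have hB : (1 : ℝ) - q ^ W ≠ 0 := by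
    intro h
    exact rpow_ne_one_of_pos hq hq1 hW (by linarith)
  have hqne : (1 : ℝ) - q ≠ 0 := fun h => hq1 (by linarith)
  have e1 : (q ^ P) ^ (y + W * x + W * ∑ j : Fin n, (k j : ℝ) / (w j.castSucc : ℝ)) =
      q ^ (P * (y + W * x)) * q ^ (W * K) := by
    rw [← Real.rpow_mul hq.le]
    have h : P * (y + W * x + W * ∑ j : Fin n, (k j : ℝ) / (w j.castSucc : ℝ)) =
        P * (y + W * x) + W * K := by rw [← hsum]; ring
    rw [h, Real.rpow_add hq]
  have e2 : (q ^ P) ^ (y + W * x) = q ^ (P * (y + W * x)) := by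
    rw [← Real.rpow_mul hq.le]
  have e3 : (q ^ W) ^ K = q ^ (W * K) := by
    rw [← Real.rpow_mul hq.le]
  simp only [qNum, e1, e2, e3]
  field_simp
  ring
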